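/- Let W = (W_{i,j})_{i,j∈V} be a symmetric matrix with nonnegative entries that is irreducible (the graph on V with edges {i,j} for i≠j with W_{i,j}>0 is connected), and let β ∈ ℝ^V be such that H_β = 2·diag(β) − W is positive definite. Then all entries of the inverse matrix (H_β)^{-1} are strictly positive: ((H_β)^{-1})_{i,j} > 0 for all i, j ∈ V. -/

import Mathlib

open Matrix

/-- The matrix `H_β = 2 diag(β) - W`. -/
noncomputable def Hmat {V : Type*} [Fintype V] [DecidableEq V]
    (W : Matrix V V ℝ) (β : V → ℝ) : Matrix V V ℝ :=
  Matrix.diagonal (fun i => 2 * β i) - W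

/-- Crossing lemma: along a walk from a zero of `x` to a non-zero of `x`,
there is an edge from a zero to a non-zero. -/
lemma cross_lemma {N : ℕ} (G : SimpleGraph (Fin N)) (x : Fin N → ℝ) {a b : Fin N}
    (w : G.Walk a b) (hb : x b ≠ 0) :
    x a = 0 → ∃ c d, x c = 0 ∧ x d ≠ 0 ∧ G.Adj c d := by
  induction w with
  | nil => intro ha; exact absurd ha hb
  | @cons u v m h p ih =>
    intro ha
    by_cases hv : x v = 0
    · exact ih hb hv
    · exact ⟨u, v, ha, hv, h⟩

/-- If `W` is symmetric with nonnegative entries, irreducible (the associated graph is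
connected), and `H_β = 2 diag(β) - W` is positive definite, then all entries of
`(H_β)⁻¹` are strictly positive. -/
theorem H_inv_entries_pos (N : ℕ) (hN : 0 < N) (W : Matrix (Fin N) (Fin N) ℝ)
    (hWsymm : W.IsSymm) (hWnonneg : ∀ i j, 0 ≤ W i j)
    (hconn : (SimpleGraph.fromRel (fun i j => 0 < W i j)).Connected)
    (β : Fin N → ℝ) (hβ : (Hmat W β).PosDef) :
    ∀ i j, 0 < (Hmat W β)⁻¹ i j := by
  intro i j
  set H := Hmat W β with hHdef
  -- basic facts about H
  have hHoff : ∀ a b : Fin N, a ≠ b → H a b = - W a b := by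
    intro a b hab
    simp [hHdef, Hmat, Matrix.sub_apply, Matrix.diagonal_apply_ne _ hab]
  have hHsymm : ∀ a b : Fin N, H a b = H b a := by
    intro a b
    rcases eq_or_ne a b with rfl | hab
    · rfl
    · rw [hHoff a b hab, hHoff b a (Ne.symm hab), hWsymm.apply a b]
  have hdet : IsUnit H.det := hβ.det_pos.ne'.isUnit
  -- the j-th column of H⁻¹
  set x : Fin N → ℝ := fun k => H⁻¹ k j with hxdef
  have hHx : H *ᵥ x = Pi.single j 1 := by
    funext k
    have h1 : H * H⁻¹ = 1 := Matrix.mul_nonsing_inv H hdet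
    have := congrArg (fun M => M k j) h1
    simp only [Matrix.mul_apply, Matrix.one_apply] at this
    simp only [Matrix.mulVec, dotProduct, hxdef]
    rw [this]
    by_cases hk : k = j <;> simp [hk, Pi.single_apply]
  -- positive definiteness in real form
  have hpos : ∀ v : Fin N → ℝ, v ≠ 0 → 0 < v ⬝ᵥ H *ᵥ v := by
    intro v hv
    have := hβ.dotProduct_mulVec_pos hv
    simpa using this
  -- the absolute-value vector
  set y : Fin N → ℝ := fun k => |x k| with hydef
  -- termwise comparison of quadratic forms
  have hterm : ∀ a b : Fin N, y a * (H a b * y b) ≤ x a * (H a b * x b) := by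
    intro a b
    rcases eq_or_ne a b with rfl | hab
    · have : y a * (H a a * y a) = H a a * (x a)^2 := by
        simp only [hydef]; linear_combination H a a * abs_mul_abs_self (x a)
      rw [this]; nlinarith [sq_nonneg (x a)]
    · rw [hHoff a b hab]
      have h1 : x a * x b ≤ |x a| * |x b| := by
        rw [← abs_mul]; exact le_abs_self _
      have h2 : W a b * (x a * x b) ≤ W a b * (|x a| * |x b|) :=
        mul_le_mul_of_nonneg_left h1 (hWnonneg a b)
      simp only [hydef]; nlinarith
  have hQle : y ⬝ᵥ H *ᵥ y ≤ x ⬝ᵥ H *ᵥ x := by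
    simp only [dotProduct, Matrix.mulVec, Finset.mul_sum]
    exact Finset.sum_le_sum fun a _ => Finset.sum_le_sum fun b _ => hterm a b
  -- bilinearity / symmetry facts
  have hsymQ : ∀ u v : Fin N → ℝ, u ⬝ᵥ H *ᵥ v = v ⬝ᵥ H *ᵥ u := by
    intro u v
    simp only [dotProduct, Matrix.mulVec, Finset.mul_sum]
    rw [Finset.sum_comm]
    apply Finset.sum_congr rfl; intro a _
    apply Finset.sum_congr rfl; intro b _
    rw [hHsymm b a]; ring
  have hQx : x ⬝ᵥ H *ᵥ x = x j := by rw [hHx]; simp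
  have hyHx : y ⬝ᵥ H *ᵥ x = |x j| := by rw [hHx]; simp [hydef]
  have hxHy : x ⬝ᵥ H *ᵥ y = |x j| := by rw [hsymQ]; exact hyHx
  -- the difference vector is zero, so x is nonnegative
  have hxnonneg : ∀ k, 0 ≤ x k := by
    by_contra hcon
    push_neg at hcon
    obtain ⟨k, hk⟩ := hcon
    have hd : y - x ≠ 0 := by
      intro h0
      have : y k - x k = 0 := by rw [← Pi.sub_apply, h0]; rfl
      have : |x k| = x k := by simpa [hydef, sub_eq_zero] using this
      rw [abs_eq_self] at this
      linarith
    have hdpos := hpos (y - x) hd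
    have hexp : (y - x) ⬝ᵥ H *ᵥ (y - x)
        = y ⬝ᵥ H *ᵥ y - y ⬝ᵥ H *ᵥ x - (x ⬝ᵥ H *ᵥ y - x ⬝ᵥ H *ᵥ x) := by
      rw [Matrix.mulVec_sub, sub_dotProduct, dotProduct_sub,
        dotProduct_sub]
    rw [hexp, hyHx, hxHy, hQx] at hdpos
    have hjle : x j ≤ |x j| := le_abs_self _
    linarith
  -- x is nonzero
  have hxne : x ≠ 0 := by
    intro h0
    have := congrArg (fun v => v j) hHx
    simp only [h0, Matrix.mulVec_zero] at this
    simp [Pi.single_apply] at this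
  -- strict positivity
  rcases lt_or_eq_of_le (hxnonneg i) with h | h
  · exact h
  · exfalso
    -- x i = 0; find a crossing edge
    obtain ⟨m, hm⟩ : ∃ m, x m ≠ 0 := by
      by_contra hc; push_neg at hc; exact hxne (funext fun k => hc k)
    obtain ⟨w⟩ := hconn.preconnected i m
    obtain ⟨a, b, ha, hb, hab⟩ := cross_lemma _ x w hm h.symm
    rw [SimpleGraph.fromRel_adj] at hab
    obtain ⟨hne, hor⟩ := hab
    have hWab : 0 < W a b := by
      rcases hor with h1 | h1
      · exact h1
      · rwa [hWsymm.apply a b] at h1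
    have hxb : 0 < x b := lt_of_le_of_ne (hxnonneg b) (Ne.symm hb)
    -- evaluate (H *ᵥ x) a
    have hval : (H *ᵥ x) a < 0 := by
      have hle : ∀ k : Fin N, k ∈ (Finset.univ : Finset (Fin N)) →
          H a k * x k ≤ (0 : ℝ) := by
        intro k _
        rcases eq_or_ne a k with rfl | hk
        · rw [ha, mul_zero]
        · rw [hHoff a k hk]
          have := mul_nonneg (hWnonneg a k) (hxnonneg k)
          linarith
      have hlt : H a b * x b < 0 := by
        rw [hHoff a b hne]
        nlinarith
      have : ∑ k, H a k * x k < ∑ k : Fin N, (0:ℝ) :=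
        Finset.sum_lt_sum hle ⟨b, Finset.mem_univ b, hlt⟩
      simpa [Matrix.mulVec, dotProduct] using this
    rw [hHx] at hval
    rcases eq_or_ne a j with rfl | haj
    · simp at hval; linarith
    · simp [Pi.single_apply, haj] at hval
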